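/- Discretization error of convolution: for w ∈ C¹ with w' ∈ L¹ and any g ∈ L²(ℝ) supported in [-L,L] with |g| ≤ G pointwise, the piecewise-constant approximation error satisfies ∑_k ∫_{k/m}^{(k+1)/m} (∫_{-L}^{L} (w(k/m − y) − w(x − y)) g(y) dy)² dx ≤ (1/m²) ‖w'‖²_{L¹} ‖g‖²_{L²}. -/

import Mathlib

open MeasureTheory intervalIntegral
open scoped ENNReal

/-- Telescoping sum over `Finset.Icc a (a+n-1)` in `ℤ`. -/
lemma telescope_Icc (f : ℤ → ℝ) (a : ℤ) :
    ∀ n : ℕ, ∑ k ∈ Finset.Icc a (a + n - 1), (f (k + 1) - f k) = f (a + n) - f a := by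
  intro n
  induction n with
  | zero =>
    rw [Finset.Icc_eq_empty (by omega)]
    simp
  | succ n ih =>
    have h1 : Finset.Icc a (a + (n + 1 : ℕ) - 1) = insert (a + n) (Finset.Icc a (a + n - 1)) := by
      ext x
      simp only [Finset.mem_Icc, Finset.mem_insert]
      omega
    rw [h1, Finset.sum_insert (by simp only [Finset.mem_Icc]; omega), ih]
    have h2 : a + ((n : ℤ) + 1) = (a + n) + 1 := by ring
    push_cast
    rw [h2]
    ring

/-- discretization error of the convolution:
`∑_k ∫_{I^m_k} (∫_{-L}^L (w(k/m − y) − w(x − y)) g(y) dy)² dx ≤ (1/m²)‖w'‖²_{L¹}‖g‖²_{L²}`. -/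
theorem convolution_discretization_error
    (w w' g : ℝ → ℝ) (G : ℝ) (m L : ℕ) (hm : 1 ≤ m)
    (hw_deriv : ∀ x, HasDerivAt w (w' x) x)
    (hw'_int : Integrable w')
    (hg_L2 : MemLp g 2 (volume : Measure ℝ))
    (hg_supp : ∀ x, x ∉ Set.Icc (-(L : ℝ)) (L : ℝ) → g x = 0)
    (hg_bdd : ∀ x, |g x| ≤ G) :
    ∑ k ∈ Finset.Icc (-(m * L : ℤ)) ((m * L : ℤ) - 1),
        ∫ x in ((k : ℝ) / m)..(((k : ℝ) + 1) / m),
          (∫ y in (-(L : ℝ))..(L : ℝ), (w ((k : ℝ) / m - y) - w (x - y)) * g y) ^ 2 ≤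
      (1 / (m : ℝ) ^ 2) * (∫ z, |w' z|) ^ 2 * ∫ y, (g y) ^ 2 := by
  have hm0 : (0:ℝ) < m := by exact_mod_cast hm
  have hmne : (m:ℝ) ≠ 0 := ne_of_gt hm0
  set c0 : ℝ := ∫ z, |w' z| with hc0
  have hw'abs : Integrable (fun t => |w' t|) volume := hw'_int.abs
  have hc0nn : 0 ≤ c0 := integral_nonneg fun z => abs_nonneg _
  set Φ : ℝ → ℝ := fun u => ∫ t in (0:ℝ)..u, |w' t| with hΦdef
  have hΦc : Continuous Φ := hw'abs.continuous_primitive 0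
  have hΦd : ∀ u v : ℝ, Φ v - Φ u = ∫ t in u..v, |w' t| := fun u v =>
    integral_interval_sub_left hw'abs.intervalIntegrable hw'abs.intervalIntegrable
  have hΦmono : Monotone Φ := by
    intro u v huv
    have h1 := hΦd u v
    have h2 : 0 ≤ ∫ t in u..v, |w' t| :=
      intervalIntegral.integral_nonneg huv fun t _ => abs_nonneg _
    linarith
  have hΦglob : ∀ u v : ℝ, u ≤ v → Φ v - Φ u ≤ c0 := by
    intro u v huv
    rw [hΦd, intervalIntegral.integral_of_le huv]
    exact setIntegral_le_integral hw'abs (Filter.Eventually.of_forall fun t => abs_nonneg _)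
  -- the measure on [-L, L]
  set μ : Measure ℝ := volume.restrict (Set.Ioc (-(L:ℝ)) (L:ℝ)) with hμdef
  have hLL : (-(L:ℝ)) ≤ (L:ℝ) := neg_le_self (Nat.cast_nonneg L)
  -- facts about g
  have hgm : AEStronglyMeasurable g μ := hg_L2.aestronglyMeasurable.restrict
  have hg2 : Integrable (fun y => g y ^ 2) volume := hg_L2.integrable_sq
  have hg2nn : (0:ℝ) ≤ ∫ y, g y ^ 2 := integral_nonneg fun y => sq_nonneg _
  have hconst : ∀ C : ℝ, Integrable (fun _ : ℝ => C) μ := fun C =>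
    integrableOn_const measure_Ioc_lt_top.ne
  have hgint : Integrable g μ := by
    refine (hconst G).mono' hgm (Filter.Eventually.of_forall fun y => ?_)
    simpa [Real.norm_eq_abs] using hg_bdd y
  have hg2μ : Integrable (fun y => g y ^ 2) μ := hg2.restrict
  -- the majorant D
  set D : ℤ → ℝ → ℝ := fun k y => Φ (((k:ℝ)+1)/m - y) - Φ ((k:ℝ)/m - y) with hDdef
  have hkm : ∀ k : ℤ, (k:ℝ)/m ≤ ((k:ℝ)+1)/m := fun k => by
    gcongr
    linarith
  have hDnn : ∀ k y, 0 ≤ D k y := fun k y =>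
    sub_nonneg.2 (hΦmono (by linarith [hkm k]))
  have hDle : ∀ k y, D k y ≤ c0 := fun k y => hΦglob _ _ (by linarith [hkm k])
  have hDcont : ∀ k, Continuous (D k) := fun k => by
    apply Continuous.sub <;> exact hΦc.comp (by fun_prop)
  have hDbd : ∀ k, ∃ C, ∀ y, ‖D k y‖ ≤ C := fun k =>
    ⟨c0, fun y => by rw [Real.norm_eq_abs, abs_of_nonneg (hDnn k y)]; exact hDle k y⟩
  have hDint : ∀ k, Integrable (D k) μ := fun k => by
    refine (hconst c0).mono' (hDcont k).aestronglyMeasurable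
      (Filter.Eventually.of_forall fun y => ?_)
    rw [Real.norm_eq_abs, abs_of_nonneg (hDnn k y)]; exact hDle k y
  have hDgint : ∀ k, Integrable (fun y => D k y * |g y|) μ := fun k =>
    hgint.abs.bdd_mul (hDcont k).aestronglyMeasurable (Filter.Eventually.of_forall (hDbd k).choose_spec)
  have hDg2int : ∀ k, Integrable (fun y => D k y * g y ^ 2) μ := fun k =>
    hg2μ.bdd_mul (hDcont k).aestronglyMeasurable (Filter.Eventually.of_forall (hDbd k).choose_spec)
  -- pointwise FTC bound
  have hL1 : ∀ (k : ℤ) (x y : ℝ), (k:ℝ)/m ≤ x → x ≤ ((k:ℝ)+1)/m →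
      |w ((k:ℝ)/m - y) - w (x - y)| ≤ D k y := by
    intro k x y hx1 hx2
    have hab : (k:ℝ)/m - y ≤ x - y := by linarith
    have hftc : w (x - y) - w ((k:ℝ)/m - y) = ∫ t in ((k:ℝ)/m - y)..(x - y), w' t :=
      (intervalIntegral.integral_eq_sub_of_hasDerivAt (fun t _ => hw_deriv t)
        hw'_int.intervalIntegrable).symm
    have h1 : |w ((k:ℝ)/m - y) - w (x - y)| = |∫ t in ((k:ℝ)/m - y)..(x - y), w' t| := by
      rw [← hftc, abs_sub_comm]
    rw [h1]
    calc |∫ t in ((k:ℝ)/m - y)..(x - y), w' t|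
        ≤ ∫ t in ((k:ℝ)/m - y)..(x - y), |w' t| :=
          intervalIntegral.abs_integral_le_integral_abs hab
      _ = Φ (x - y) - Φ ((k:ℝ)/m - y) := (hΦd _ _).symm
      _ ≤ D k y := by
          have h2 : Φ (x - y) ≤ Φ (((k:ℝ)+1)/m - y) := hΦmono (by linarith)
          simp only [hDdef]; linarith
  -- D as a set integral
  have hDset : ∀ (k : ℤ) (y : ℝ),
      D k y = ∫ z in Set.Ioc ((k:ℝ)/m) (((k:ℝ)+1)/m), |w' (z - y)| := by
    intro k y
    have h1 : D k y = ∫ t in ((k:ℝ)/m - y)..(((k:ℝ)+1)/m - y), |w' t| := hΦd _ _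
    rw [h1, ← intervalIntegral.integral_comp_sub_right (fun t => |w' t|) y,
      intervalIntegral.integral_of_le (hkm k)]
  -- measurability of w'
  have hw'meas : Measurable w' := by
    have hfe : w' = deriv w := funext fun x => ((hw_deriv x).deriv).symm
    rw [hfe]; exact measurable_deriv w
  -- Fubini bound : ∫ D_k dμ ≤ c0 / m
  have hK : ∀ k : ℤ, (∫ y, D k y ∂μ) ≤ c0 * (1/m) := by
    intro k
    set Ce : ℝ≥0∞ := ∫⁻ t, ENNReal.ofReal |w' t| with hCedef
    have hCef : ENNReal.ofReal c0 = Ce :=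
      ofReal_integral_eq_lintegral_ofReal hw'abs (Filter.Eventually.of_forall fun t => abs_nonneg _)
    have hDl : ∀ y : ℝ, ENNReal.ofReal (D k y)
        = ∫⁻ z in Set.Ioc ((k:ℝ)/m) (((k:ℝ)+1)/m), ENNReal.ofReal |w' (z - y)| := by
      intro y
      rw [hDset k y]
      exact ofReal_integral_eq_lintegral_ofReal
        (((hw'_int.comp_sub_right y).abs).integrableOn)
        (Filter.Eventually.of_forall fun z => abs_nonneg _)
    have hmeas2 : Measurable (Function.uncurry fun (y z : ℝ) => ENNReal.ofReal |w' (z - y)|) :=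
      ((hw'meas.abs).ennreal_ofReal).comp (measurable_snd.sub measurable_fst)
    have key : (∫⁻ y, ENNReal.ofReal (D k y) ∂μ) ≤ Ce * ENNReal.ofReal (1/m) := by
      calc (∫⁻ y, ENNReal.ofReal (D k y) ∂μ)
          = ∫⁻ y, (∫⁻ z in Set.Ioc ((k:ℝ)/m) (((k:ℝ)+1)/m),
              ENNReal.ofReal |w' (z - y)|) ∂μ := by simp_rw [hDl]
        _ = ∫⁻ z in Set.Ioc ((k:ℝ)/m) (((k:ℝ)+1)/m),
              (∫⁻ y, ENNReal.ofReal |w' (z - y)| ∂μ) :=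
            lintegral_lintegral_swap hmeas2.aemeasurable
        _ ≤ ∫⁻ _ in Set.Ioc ((k:ℝ)/m) (((k:ℝ)+1)/m), Ce := by
            refine lintegral_mono fun z => ?_
            calc (∫⁻ y, ENNReal.ofReal |w' (z - y)| ∂μ)
                ≤ ∫⁻ y, ENNReal.ofReal |w' (z - y)| :=
                  lintegral_mono' Measure.restrict_le_self le_rfl
              _ = Ce := (Measure.measurePreserving_sub_left volume z).lintegral_comp
                  ((hw'meas.abs).ennreal_ofReal)
        _ = Ce * volume (Set.Ioc ((k:ℝ)/m) (((k:ℝ)+1)/m)) := setLIntegral_const _ _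
        _ = Ce * ENNReal.ofReal (1/m) := by
            rw [Real.volume_Ioc]
            congr 1
            congr 1
            field_simp
            ring
    have hDrepr : (∫ y, D k y ∂μ) = (∫⁻ y, ENNReal.ofReal (D k y) ∂μ).toReal := by
      rw [integral_eq_lintegral_of_nonneg_ae (Filter.Eventually.of_forall (hDnn k))
        (hDcont k).aestronglyMeasurable.restrict]
    have hne : Ce * ENNReal.ofReal (1/m) ≠ ⊤ := by
      rw [← hCef]
      exact ENNReal.mul_ne_top ENNReal.ofReal_ne_top ENNReal.ofReal_ne_top
    rw [hDrepr]
    calc (∫⁻ y, ENNReal.ofReal (D k y) ∂μ).toReal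
        ≤ (Ce * ENNReal.ofReal (1/m)).toReal := ENNReal.toReal_mono hne key
      _ = c0 * (1/m) := by
          rw [← hCef, ← ENNReal.ofReal_mul hc0nn, ENNReal.toReal_ofReal (by positivity)]
  -- Cauchy–Schwarz with weight D
  have hCS : ∀ k : ℤ, (∫ y, D k y * |g y| ∂μ) ^ 2
      ≤ (∫ y, D k y ∂μ) * (∫ y, D k y * g y ^ 2 ∂μ) := by
    intro k
    set A := ∫ y, D k y ∂μ with hA
    set Bq := ∫ y, D k y * |g y| ∂μ with hB
    set Cq := ∫ y, D k y * g y ^ 2 ∂μ with hC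
    have hquad : ∀ t : ℝ, 0 ≤ A * (t * t) + (-2 * Bq) * t + Cq := by
      intro t
      have h0 : 0 ≤ ∫ y, D k y * (t - |g y|) ^ 2 ∂μ :=
        integral_nonneg fun y => mul_nonneg (hDnn k y) (sq_nonneg _)
      have hfun : (fun y => D k y * (t - |g y|) ^ 2)
          = fun y => (t * t) * D k y + ((-2 * t) * (D k y * |g y|) + D k y * g y ^ 2) := by
        funext y
        rw [← sq_abs (g y)]
        ring
      have hadd : Integrable (fun y => (-2 * t) * (D k y * |g y|) + D k y * g y ^ 2) μ :=
        ((hDgint k).const_mul _).add (hDg2int k)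
      rw [hfun, integral_add ((hDint k).const_mul (t * t)) hadd,
        integral_add ((hDgint k).const_mul (-2 * t)) (hDg2int k),
        MeasureTheory.integral_const_mul, MeasureTheory.integral_const_mul] at h0
      rw [← hA, ← hB, ← hC] at h0
      nlinarith [h0]
    have hd := discrim_le_zero hquad
    rw [discrim] at hd
    nlinarith [hd]
  -- pointwise-in-x bound of the inner integral
  have hInner : ∀ (k : ℤ) (x : ℝ), (k:ℝ)/m ≤ x → x ≤ ((k:ℝ)+1)/m →
      (∫ y in (-(L:ℝ))..(L:ℝ), (w ((k:ℝ)/m - y) - w (x - y)) * g y) ^ 2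
        ≤ (∫ y, D k y ∂μ) * (∫ y, D k y * g y ^ 2 ∂μ) := by
    intro k x hx1 hx2
    have hrw : (∫ y in (-(L:ℝ))..(L:ℝ), (w ((k:ℝ)/m - y) - w (x - y)) * g y)
        = ∫ y, (w ((k:ℝ)/m - y) - w (x - y)) * g y ∂μ :=
      intervalIntegral.integral_of_le hLL
    rw [hrw]
    have hBnn : 0 ≤ ∫ y, D k y * |g y| ∂μ :=
      integral_nonneg fun y => mul_nonneg (hDnn k y) (abs_nonneg _)
    have habs : |∫ y, (w ((k:ℝ)/m - y) - w (x - y)) * g y ∂μ| ≤ ∫ y, D k y * |g y| ∂μ := by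
      by_cases hint : Integrable (fun y => (w ((k:ℝ)/m - y) - w (x - y)) * g y) μ
      · calc |∫ y, (w ((k:ℝ)/m - y) - w (x - y)) * g y ∂μ|
            ≤ ∫ y, |w ((k:ℝ)/m - y) - w (x - y)| * |g y| ∂μ := by
              simpa [Real.norm_eq_abs] using
                norm_integral_le_integral_norm (fun y => (w ((k:ℝ)/m - y) - w (x - y)) * g y) (μ := μ)
          _ ≤ ∫ y, D k y * |g y| ∂μ := by
              refine integral_mono
                (hint.abs.congr (Filter.Eventually.of_forall fun y => abs_mul _ _))
                (hDgint k) fun y => ?_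
              exact mul_le_mul_of_nonneg_right (hL1 k x y hx1 hx2) (abs_nonneg _)
      · rw [integral_undef hint]
        simpa using hBnn
    calc (∫ y, (w ((k:ℝ)/m - y) - w (x - y)) * g y ∂μ) ^ 2
        = |∫ y, (w ((k:ℝ)/m - y) - w (x - y)) * g y ∂μ| ^ 2 := (sq_abs _).symm
      _ ≤ (∫ y, D k y * |g y| ∂μ) ^ 2 := by
          have := abs_nonneg (∫ y, (w ((k:ℝ)/m - y) - w (x - y)) * g y ∂μ)
          nlinarith [habs]
      _ ≤ _ := hCS k
  -- bound on each term of the sum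
  have hTerm : ∀ k : ℤ,
      (∫ x in ((k:ℝ)/m)..(((k:ℝ)+1)/m),
        (∫ y in (-(L:ℝ))..(L:ℝ), (w ((k:ℝ)/m - y) - w (x - y)) * g y) ^ 2)
      ≤ (1/m) * ((∫ y, D k y ∂μ) * (∫ y, D k y * g y ^ 2 ∂μ)) := by
    intro k
    have hCknn : (0:ℝ) ≤ (∫ y, D k y ∂μ) * (∫ y, D k y * g y ^ 2 ∂μ) :=
      mul_nonneg (integral_nonneg (hDnn k))
        (integral_nonneg fun y => mul_nonneg (hDnn k y) (sq_nonneg _))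
    rw [intervalIntegral.integral_of_le (hkm k)]
    by_cases hint : IntegrableOn
        (fun x => (∫ y in (-(L:ℝ))..(L:ℝ), (w ((k:ℝ)/m - y) - w (x - y)) * g y) ^ 2)
        (Set.Ioc ((k:ℝ)/m) (((k:ℝ)+1)/m)) volume
    · calc (∫ x in Set.Ioc ((k:ℝ)/m) (((k:ℝ)+1)/m),
            (∫ y in (-(L:ℝ))..(L:ℝ), (w ((k:ℝ)/m - y) - w (x - y)) * g y) ^ 2)
          ≤ ∫ _ in Set.Ioc ((k:ℝ)/m) (((k:ℝ)+1)/m),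
              ((∫ y, D k y ∂μ) * (∫ y, D k y * g y ^ 2 ∂μ)) := by
            refine setIntegral_mono_on hint
              (integrableOn_const measure_Ioc_lt_top.ne) measurableSet_Ioc
              fun x hx => hInner k x (le_of_lt hx.1) hx.2
        _ = (volume (Set.Ioc ((k:ℝ)/m) (((k:ℝ)+1)/m))).toReal
              * ((∫ y, D k y ∂μ) * (∫ y, D k y * g y ^ 2 ∂μ)) := by
            rw [setIntegral_const]; rfl
        _ = (1/m) * ((∫ y, D k y ∂μ) * (∫ y, D k y * g y ^ 2 ∂μ)) := by
            rw [Real.volume_Ioc]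
            congr 1
            rw [ENNReal.toReal_ofReal (by linarith [hkm k])]
            field_simp
            ring
    · rw [integral_undef hint]
      positivity
  -- assembling everything
  set N : ℤ := (m * L : ℤ) with hN
  calc (∑ k ∈ Finset.Icc (-N) (N - 1),
        ∫ x in ((k:ℝ)/m)..(((k:ℝ)+1)/m),
          (∫ y in (-(L:ℝ))..(L:ℝ), (w ((k:ℝ)/m - y) - w (x - y)) * g y) ^ 2)
      ≤ ∑ k ∈ Finset.Icc (-N) (N - 1),
          (1/m) * ((∫ y, D k y ∂μ) * (∫ y, D k y * g y ^ 2 ∂μ)) :=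
        Finset.sum_le_sum fun k _ => hTerm k
    _ ≤ ∑ k ∈ Finset.Icc (-N) (N - 1),
          ((1/m) * (c0 * (1/m))) * (∫ y, D k y * g y ^ 2 ∂μ) := by
        refine Finset.sum_le_sum fun k _ => ?_
        have hCnn : (0:ℝ) ≤ ∫ y, D k y * g y ^ 2 ∂μ :=
          integral_nonneg fun y => mul_nonneg (hDnn k y) (sq_nonneg _)
        have h1 : (∫ y, D k y ∂μ) * (∫ y, D k y * g y ^ 2 ∂μ)
            ≤ (c0 * (1/m)) * (∫ y, D k y * g y ^ 2 ∂μ) :=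
          mul_le_mul_of_nonneg_right (hK k) hCnn
        calc (1/(m:ℝ)) * ((∫ y, D k y ∂μ) * (∫ y, D k y * g y ^ 2 ∂μ))
            ≤ (1/m) * ((c0 * (1/m)) * (∫ y, D k y * g y ^ 2 ∂μ)) :=
              mul_le_mul_of_nonneg_left h1 (by positivity)
          _ = ((1/m) * (c0 * (1/m))) * (∫ y, D k y * g y ^ 2 ∂μ) := by ring
    _ = ((1/m) * (c0 * (1/m))) * ∑ k ∈ Finset.Icc (-N) (N - 1), ∫ y, D k y * g y ^ 2 ∂μ := by
        rw [Finset.mul_sum]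
    _ ≤ ((1/m) * (c0 * (1/m))) * (c0 * ∫ y, g y ^ 2) := by
        refine mul_le_mul_of_nonneg_left ?_ (by positivity)
        have hsum : (∑ k ∈ Finset.Icc (-N) (N - 1), ∫ y, D k y * g y ^ 2 ∂μ)
            = ∫ y, (∑ k ∈ Finset.Icc (-N) (N - 1), D k y * g y ^ 2) ∂μ :=
          (integral_finset_sum _ fun k _ => hDg2int k).symm
        rw [hsum]
        have htel : ∀ y : ℝ, (∑ k ∈ Finset.Icc (-N) (N - 1), D k y * g y ^ 2)
            = (Φ ((L:ℝ) - y) - Φ (-(L:ℝ) - y)) * g y ^ 2 := by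
          intro y
          rw [← Finset.sum_mul]
          congr 1
          have h0 : -N + ((2 * m * L : ℕ) : ℤ) - 1 = N - 1 := by
            simp only [hN]; push_cast; ring
          have h1 := telescope_Icc (fun k : ℤ => Φ ((k:ℝ)/m - y)) (-N) (2 * m * L)
          rw [h0] at h1
          have h2 : (∑ k ∈ Finset.Icc (-N) (N - 1), D k y)
              = ∑ k ∈ Finset.Icc (-N) (N - 1),
                ((fun k : ℤ => Φ ((k:ℝ)/m - y)) (k + 1) - (fun k : ℤ => Φ ((k:ℝ)/m - y)) k) := by
            refine Finset.sum_congr rfl fun k _ => ?_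
            simp only [hDdef]
            push_cast
            ring_nf
          rw [h2, h1]
          have h3 : ((-N : ℤ):ℝ) = -(m*L:ℝ) := by push_cast [hN]; ring
          have h4 : ((-N + (2 * m * L : ℕ) : ℤ):ℝ) = (m*L:ℝ) := by push_cast [hN]; ring
          rw [h3, h4]
          have h5 : (m*L:ℝ)/m = (L:ℝ) := by
            rw [mul_comm, mul_div_assoc, div_self hmne, mul_one]
          have h6 : (-(m*L:ℝ))/m = -(L:ℝ) := by
            rw [neg_div, mul_comm, mul_div_assoc, div_self hmne, mul_one]
          rw [h5, h6]
        simp_rw [htel]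
        have hbd : Integrable (fun y => (Φ ((L:ℝ) - y) - Φ (-(L:ℝ) - y)) * g y ^ 2) μ := by
          refine hg2μ.bdd_mul (c := c0) ?_ (Filter.Eventually.of_forall fun y => ?_)
          · exact ((hΦc.comp (by fun_prop)).sub (hΦc.comp (by fun_prop))).aestronglyMeasurable
          · rw [Real.norm_eq_abs, abs_of_nonneg (sub_nonneg.2 (hΦmono (by linarith)))]
            exact hΦglob _ _ (by linarith)
        calc (∫ y, (Φ ((L:ℝ) - y) - Φ (-(L:ℝ) - y)) * g y ^ 2 ∂μ)
            ≤ ∫ y, c0 * g y ^ 2 ∂μ := by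
              refine integral_mono hbd (hg2μ.const_mul c0) fun y => ?_
              exact mul_le_mul_of_nonneg_right (hΦglob _ _ (by linarith)) (sq_nonneg _)
          _ = c0 * ∫ y, g y ^ 2 ∂μ := MeasureTheory.integral_const_mul _ _
          _ ≤ c0 * ∫ y, g y ^ 2 := by
              refine mul_le_mul_of_nonneg_left ?_ hc0nn
              exact setIntegral_le_integral hg2 (Filter.Eventually.of_forall fun y => sq_nonneg _)
    _ = (1 / (m:ℝ) ^ 2) * c0 ^ 2 * ∫ y, g y ^ 2 := by ring
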